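/- (Remark 7.7, case b = 2.) Let p > 3 be a prime, let k and s be integers, and let h > 0 be a real number with (⌈(p−3)h⌉ − 1)/(2(p−1)) ≥ 1. Then there exists an integer k' such that: (a) k' ≡ k (mod (p−1)·p^{⌊m_p^{(2)}(h)⌋}); (b) k'−1 ≢ s (mod p+1); and (c) ⌊(k'−2)/(p−1)⌋ < h < (k'−2)/2. -/
import Mathlib


/-- `m_p^{(2)}(h) = log_p((⌈(p−3)h⌉ − 1)/(2(p−1)))` if `(⌈(p−3)h⌉ − 1)/(2(p−1)) ≥ 1`,
and `0` otherwise. -/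
noncomputable def mp2 (p : ℕ) (h : ℝ) : ℝ :=
  if 1 ≤ ((⌈((p : ℝ) - 3) * h⌉ : ℝ) - 1) / (2 * ((p : ℝ) - 1)) then
    Real.logb p (((⌈((p : ℝ) - 3) * h⌉ : ℝ) - 1) / (2 * ((p : ℝ) - 1)))
  else 0

/-- **Remark 7.7, case b = 2.** Let `p > 3` be prime, `k, s` integers, and
`h > 0` a real with `(⌈(p−3)h⌉ − 1)/(2(p−1)) ≥ 1`. Then there is an integer `k'` with
(a) `k' ≡ k (mod (p−1)p^⌊m_p^{(2)}(h)⌋)`, (b) `k'−1 ≢ s (mod p+1)`, and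
(c) `⌊(k'−2)/(p−1)⌋ < h < (k'−2)/2`. -/
theorem exists_weight_with_deep_congruence_b2 (p : ℕ) (hp : p.Prime) (hp3 : 3 < p)
    (k s : ℤ) (h : ℝ) (hh : 0 < h)
    (hstar : 1 ≤ ((⌈((p : ℝ) - 3) * h⌉ : ℝ) - 1) / (2 * ((p : ℝ) - 1))) :
    ∃ k' : ℤ,
      Int.ModEq (((p : ℤ) - 1) * (p : ℤ) ^ (⌊mp2 p h⌋.toNat)) k' k ∧
      ¬ Int.ModEq ((p : ℤ) + 1) (k' - 1) s ∧
      ((⌊((k' : ℝ) - 2) / ((p : ℝ) - 1)⌋ : ℝ) < h ∧ h < ((k' : ℝ) - 2) / 2) := by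
  have hp5 : 5 ≤ p := by
    have h4 : p ≠ 4 := by rintro rfl; norm_num at hp
    omega
  have hp5' : (5:ℝ) ≤ (p:ℝ) := by exact_mod_cast hp5
  have hp1 : (1:ℝ) < (p:ℝ) := by linarith
  set C : ℝ := ((⌈((p : ℝ) - 3) * h⌉ : ℝ) - 1) / (2 * ((p : ℝ) - 1)) with hCdef
  have hC1 : 1 ≤ C := hstar
  have hC0 : 0 < C := by linarith
  have hmp2 : mp2 p h = Real.logb p C := by rw [mp2, if_pos hstar]
  set m : ℕ := (⌊mp2 p h⌋).toNat with hm
  have hlog0 : 0 ≤ Real.logb p C := Real.logb_nonneg hp1 hC1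
  have hfl0 : 0 ≤ ⌊mp2 p h⌋ := by
    rw [hmp2]; exact Int.floor_nonneg.mpr hlog0
  have hmle : (m:ℝ) ≤ Real.logb p C := by
    have : ((m:ℤ):ℝ) ≤ Real.logb p C := by
      rw [hm, Int.toNat_of_nonneg hfl0, ← hmp2]
      exact Int.floor_le _
    exact_mod_cast this
  have hpm_le_C : (p:ℝ)^m ≤ C := by
    have h1 : (p:ℝ)^(m:ℝ) ≤ (p:ℝ)^(Real.logb p C) := by
      exact Real.rpow_le_rpow_of_exponent_le (le_of_lt hp1) hmle
    rw [Real.rpow_natCast] at h1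
    rwa [Real.rpow_logb (by linarith) (by linarith) hC0] at h1
  -- key inequality: 2(p-1)p^m < (p-3)h
  have hceil : (⌈((p : ℝ) - 3) * h⌉ : ℝ) - 1 < ((p:ℝ) - 3) * h := by
    have := Int.ceil_lt_add_one (((p : ℝ) - 3) * h)
    linarith
  have h2p1 : (0:ℝ) < 2 * ((p:ℝ) - 1) := by linarith
  have hkey : 2 * ((p:ℝ) - 1) * (p:ℝ)^m < ((p:ℝ) - 3) * h := by
    have : 2 * ((p:ℝ) - 1) * (p:ℝ)^m ≤ (⌈((p : ℝ) - 3) * h⌉ : ℝ) - 1 := by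
      have := mul_le_mul_of_nonneg_left hpm_le_C (le_of_lt h2p1)
      rwa [hCdef, mul_div_cancel₀ _ (ne_of_gt h2p1)] at this
    linarith
  set Mz : ℤ := ((p : ℤ) - 1) * (p : ℤ) ^ m with hMz
  have hMr : ((Mz:ℤ):ℝ) = ((p:ℝ) - 1) * (p:ℝ)^m := by push_cast [hMz]; ring
  have hpmpos : (0:ℝ) < (p:ℝ)^m := by positivity
  have hMrpos : (0:ℝ) < (Mz:ℝ) := by rw [hMr]; nlinarith
  have h2M : 2 * ((Mz:ℝ)) < ((p:ℝ) - 3) * h := by rw [hMr]; nlinarith [hkey]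
  -- choose t
  set q : ℤ := ⌊(2*h + 2 - (k:ℝ)) / (Mz:ℝ)⌋ + 1 with hq
  set t : ℤ := k + Mz * q with ht
  have ht_lb : 2*h + 2 < (t:ℝ) := by
    have h1 : (2*h + 2 - (k:ℝ)) / (Mz:ℝ) < (q:ℤ) := by
      rw [hq]; push_cast; exact Int.lt_floor_add_one _
    have h2 : 2*h + 2 - (k:ℝ) < (Mz:ℝ) * (q:ℝ) := by
      rw [div_lt_iff₀ hMrpos] at h1
      push_cast at h1 ⊢
      nlinarith
    rw [ht]; push_cast; linarith
  have ht_ub : (t:ℝ) ≤ 2*h + 2 + (Mz:ℝ) := by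
    have h1 : ((q:ℝ) - 1) ≤ (2*h + 2 - (k:ℝ)) / (Mz:ℝ) := by
      rw [hq]; push_cast; simpa using Int.floor_le ((2*h + 2 - (k:ℝ)) / (Mz:ℝ))
    rw [le_div_iff₀ hMrpos] at h1
    rw [ht]; push_cast
    nlinarith
  -- bounds lemma
  have bounds : ∀ x : ℤ, 2*h + 2 < (x:ℝ) → (x:ℝ) < ((p:ℝ) - 1)*h + 2 →
      ((⌊((x : ℝ) - 2) / ((p : ℝ) - 1)⌋ : ℝ) < h ∧ h < ((x : ℝ) - 2) / 2) := by
    intro x hlo hhi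
    constructor
    · have hx : ((x:ℝ) - 2) / ((p:ℝ) - 1) < h := by
        rw [div_lt_iff₀ (by linarith : (0:ℝ) < (p:ℝ) - 1)]; linarith
      exact lt_of_le_of_lt (Int.floor_le _) hx
    · linarith
  -- modular facts
  have hmod : ∀ c : ℤ, Int.ModEq Mz (k + Mz * c) k := by
    intro c
    exact (Int.modEq_iff_dvd.mpr ⟨-c, by ring⟩)
  have hndvd : ¬ ((p:ℤ) + 1) ∣ Mz := by
    intro hd
    have hcop : IsCoprime ((p:ℤ) + 1) ((p:ℤ)) := ⟨1, -1, by ring⟩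
    have hcop2 : IsCoprime ((p:ℤ) + 1) ((p:ℤ)^m) := hcop.pow_right
    have hd2 : ((p:ℤ) + 1) ∣ ((p:ℤ) - 1) := hcop2.dvd_of_dvd_mul_right (hMz ▸ hd)
    have hle := Int.le_of_dvd (by omega : (0:ℤ) < (p:ℤ) - 1) hd2
    omega
  by_cases hcase : Int.ModEq ((p:ℤ) + 1) (t - 1) s
  · refine ⟨t + Mz, ?_, ?_, ?_⟩
    · have : t + Mz = k + Mz * (q + 1) := by rw [ht]; ring
      rw [this]; exact hmod _
    · intro hcon
      have h2 : Int.ModEq ((p:ℤ)+1) (t + Mz - 1) (t - 1) := hcon.trans hcase.symm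
      have := Int.ModEq.dvd h2
      have : ((p:ℤ)+1) ∣ Mz := by
        have h3 : (t - 1) - (t + Mz - 1) = -Mz := by ring
        rw [h3] at this
        exact (dvd_neg.mp this)
      exact hndvd this
    · apply bounds
      · push_cast; linarith
      · push_cast; linarith
  · refine ⟨t, ?_, hcase, ?_⟩
    · rw [ht]; exact hmod _
    · apply bounds
      · exact ht_lb
      · linarith
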